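/- Let A be an LM_θ-algebra and (X(A),{f_i^A}_{i∈I}) its dual l_θP-space of prime filters. Then the map Θ_OS defined by Θ_OS(G) = {(a,b) ∈ A×A : σ_A(a) △ σ_A(b) ⊆ G} is a lattice isomorphism from the lattice (ordered by inclusion) of all open subsets G of X(A) whose complement X(A)\G is semimodal onto the lattice of all LM_θ-congruences on A. -/

import Mathlib

/-- An LM_θ-algebra over a linearly ordered index set `I`:
a bounded distributive lattice with operations `phi i` and `phibar i`. -/
structure LMAlg (I A : Type*) [LinearOrder I] [DistribLattice A] [BoundedOrder A] where
  phi : I → A → A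
  phibar : I → A → A
  phi_sup : ∀ i x y, phi i (x ⊔ y) = phi i x ⊔ phi i y
  phi_inf : ∀ i x y, phi i (x ⊓ y) = phi i x ⊓ phi i y
  phi_bot : ∀ i, phi i ⊥ = ⊥
  phi_top : ∀ i, phi i ⊤ = ⊤
  sup_phibar : ∀ i x, phi i x ⊔ phibar i x = ⊤
  inf_phibar : ∀ i x, phi i x ⊓ phibar i x = ⊥
  phi_phi : ∀ i j x, phi i (phi j x) = phi j x
  phi_mono : ∀ ⦃i j : I⦄, i ≤ j → ∀ x, phi i x ≤ phi j x
  determined : ∀ x y, (∀ i, phi i x = phi i y) → x = y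

/-- A prime filter of a bounded distributive lattice. -/
structure PrimeFilter (A : Type*) [DistribLattice A] [BoundedOrder A] where
  carrier : Set A
  top_mem : ⊤ ∈ carrier
  bot_notMem : ⊥ ∉ carrier
  mem_of_le : ∀ {a b : A}, a ∈ carrier → a ≤ b → b ∈ carrier
  inf_mem : ∀ {a b : A}, a ∈ carrier → b ∈ carrier → a ⊓ b ∈ carrier
  prime : ∀ {a b : A}, a ⊔ b ∈ carrier → a ∈ carrier ∨ b ∈ carrier

variable {I A : Type*} [LinearOrder I] [DistribLattice A] [BoundedOrder A]

/-- Prime filters ordered by inclusion. -/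
instance : PartialOrder (PrimeFilter A) where
  le P Q := P.carrier ⊆ Q.carrier
  le_refl _ _ hx := hx
  le_trans _ _ _ h1 h2 _ hx := h2 (h1 hx)
  le_antisymm P Q h1 h2 := by
    cases P; cases Q
    simp only [PrimeFilter.mk.injEq]
    exact subset_antisymm h1 h2

/-- The map `σ_A`. -/
def sigmaA (a : A) : Set (PrimeFilter A) := {P | a ∈ P.carrier}

/-- The Priestley topology on the set of prime filters, with sub-basis the sets
`σ_A a` and their complements. -/
instance : TopologicalSpace (PrimeFilter A) :=
  TopologicalSpace.generateFrom
    (Set.range (sigmaA (A := A)) ∪ Set.range (fun a : A => (sigmaA a)ᶜ))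

/-- The map `f_i^A (P) = φ_i⁻¹(P)` on prime filters. -/
def LMAlg.fA (L : LMAlg I A) (i : I) (P : PrimeFilter A) : PrimeFilter A where
  carrier := L.phi i ⁻¹' P.carrier
  top_mem := by simp only [Set.mem_preimage, L.phi_top]; exact P.top_mem
  bot_notMem := by simp only [Set.mem_preimage, L.phi_bot]; exact P.bot_notMem
  mem_of_le := by
    intro a b ha hab
    have h1 : L.phi i b = L.phi i a ⊔ L.phi i b := by
      rw [← L.phi_sup, sup_eq_right.mpr hab]
    exact P.mem_of_le ha (le_sup_left.trans_eq h1.symm)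
  inf_mem := by
    intro a b ha hb
    simp only [Set.mem_preimage, L.phi_inf]
    exact P.inf_mem ha hb
  prime := by
    intro a b h
    simp only [Set.mem_preimage, L.phi_sup] at h
    exact P.prime h

/-- An LM_θ-congruence: a bounded-lattice congruence compatible with all `phi i`, `phibar i`. -/
structure IsLMCongr (L : LMAlg I A) (r : A → A → Prop) : Prop where
  refl : ∀ x, r x x
  symm : ∀ {x y}, r x y → r y x
  trans : ∀ {x y z}, r x y → r y z → r x z
  sup_congr : ∀ {x y u v}, r x y → r u v → r (x ⊔ u) (y ⊔ v)
  inf_congr : ∀ {x y u v}, r x y → r u v → r (x ⊓ u) (y ⊓ v)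
  phi_congr : ∀ (i : I) {x y}, r x y → r (L.phi i x) (L.phi i y)
  phibar_congr : ∀ (i : I) {x y}, r x y → r (L.phibar i x) (L.phibar i y)

/-- A θ-congruence: a lattice congruence `r` with `r x y ↔ ∀ i, r (φ_i x) (φ_i y)`. -/
structure IsThetaCongr (L : LMAlg I A) (r : A → A → Prop) : Prop where
  refl : ∀ x, r x x
  symm : ∀ {x y}, r x y → r y x
  trans : ∀ {x y z}, r x y → r y z → r x z
  sup_congr : ∀ {x y u v}, r x y → r u v → r (x ⊔ u) (y ⊔ v)
  inf_congr : ∀ {x y u v}, r x y → r u v → r (x ⊓ u) (y ⊓ v)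
  theta : ∀ x y, r x y ↔ ∀ i : I, r (L.phi i x) (L.phi i y)

/-- `Y` is semimodal if `f i '' Y ⊆ Y` for all `i`. -/
def Semimodal {I X : Type*} (f : I → X → X) (Y : Set X) : Prop := ∀ i, f i '' Y ⊆ Y

/-- `Y` is modal if `f i ⁻¹' Y = Y` for all `i`. -/
def Modal {I X : Type*} (f : I → X → X) (Y : Set X) : Prop := ∀ i, f i ⁻¹' Y = Y

/-- `Y` is a θ-subset if `⋃ i, f i '' Y ⊆ Y ⊆ closure (⋃ i, f i '' Y)`. -/
def ThetaSubset {I X : Type*} [TopologicalSpace X] (f : I → X → X) (Y : Set X) : Prop :=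
  (⋃ i, f i '' Y) ⊆ Y ∧ Y ⊆ closure (⋃ i, f i '' Y)

/-- The relation `Θ` determined by an (open) subset `G` of the dual space:
`(a,b) ∈ Θ(G)` iff `σ_A a △ σ_A b ⊆ G`. -/
def thetaO (G : Set (PrimeFilter A)) : A → A → Prop :=
  fun a b => symmDiff (sigmaA a) (sigmaA b) ⊆ G

/-- `r` is the principal LM_θ-congruence generated by `(a,b)`. -/
def IsPrincipalLMCongrOn (L : LMAlg I A) (r : A → A → Prop) (a b : A) : Prop :=
  IsLMCongr L r ∧ r a b ∧ ∀ s, IsLMCongr L s → s a b → ∀ x y, r x y → s x y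

/-- `r` is the principal θ-congruence generated by `(a,b)`. -/
def IsPrincipalThetaCongrOn (L : LMAlg I A) (r : A → A → Prop) (a b : A) : Prop :=
  IsThetaCongr L r ∧ r a b ∧ ∀ s, IsThetaCongr L s → s a b → ∀ x y, r x y → s x y

/-- `r` is a principal LM_θ-congruence. -/
def IsPrincipalLMCongr (L : LMAlg I A) (r : A → A → Prop) : Prop :=
  ∃ a b, IsPrincipalLMCongrOn L r a b

/-- `r` is a principal θ-congruence. -/
def IsPrincipalThetaCongr (L : LMAlg I A) (r : A → A → Prop) : Prop :=
  ∃ a b, IsPrincipalThetaCongrOn L r a b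

/-- `r` is a Boolean LM_θ-congruence: a complemented element of the lattice of
LM_θ-congruences ordered by inclusion (the bottom element is equality and the
join of `r` and its complement, i.e. the least congruence containing both, is
the total relation). -/
def IsBooleanLMCongr (L : LMAlg I A) (r : A → A → Prop) : Prop :=
  IsLMCongr L r ∧ ∃ s, IsLMCongr L s ∧
    (∀ x y, (r x y ∧ s x y) ↔ x = y) ∧
    (∀ t, IsLMCongr L t → (∀ x y, r x y → t x y) → (∀ x y, s x y → t x y) → ∀ x y, t x y)


section Aux

variable {I A : Type*} [LinearOrder I] [DistribLattice A] [BoundedOrder A]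

lemma mem_sigmaA {a : A} {P : PrimeFilter A} : P ∈ sigmaA a ↔ a ∈ P.carrier := Iff.rfl

lemma sigmaA_inf (a b : A) : sigmaA (a ⊓ b) = sigmaA a ∩ sigmaA (A := A) b := by
  ext P
  constructor
  · intro h; exact ⟨P.mem_of_le h inf_le_left, P.mem_of_le h inf_le_right⟩
  · rintro ⟨h1, h2⟩; exact P.inf_mem h1 h2

lemma sigmaA_sup (a b : A) : sigmaA (a ⊔ b) = sigmaA a ∪ sigmaA (A := A) b := by
  ext P
  constructor
  · intro h; exact P.prime h
  · rintro (h | h)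
    · exact P.mem_of_le h le_sup_left
    · exact P.mem_of_le h le_sup_right

lemma sigmaA_top : sigmaA (⊤ : A) = Set.univ :=
  Set.eq_univ_of_forall fun P => P.top_mem

lemma sigmaA_bot : sigmaA (⊥ : A) = ∅ :=
  Set.eq_empty_of_forall_notMem fun P => P.bot_notMem

lemma isOpen_sigmaA (a : A) : IsOpen (sigmaA (A := A) a) :=
  TopologicalSpace.GenerateOpen.basic _ (Or.inl ⟨a, rfl⟩)

lemma isOpen_compl_sigmaA (a : A) : IsOpen (sigmaA (A := A) a)ᶜ :=
  TopologicalSpace.GenerateOpen.basic _ (Or.inr ⟨a, rfl⟩)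

lemma isClosed_sigmaA (a : A) : IsClosed (sigmaA (A := A) a) :=
  ⟨isOpen_compl_sigmaA a⟩

lemma isOpen_symmDiff_sigmaA (a b : A) :
    IsOpen (symmDiff (sigmaA a) (sigmaA (A := A) b)) := by
  rw [Set.symmDiff_def]
  exact ((isOpen_sigmaA a).sdiff (isClosed_sigmaA b)).union
    ((isOpen_sigmaA b).sdiff (isClosed_sigmaA a))

lemma isClosed_symmDiff_sigmaA (a b : A) :
    IsClosed (symmDiff (sigmaA a) (sigmaA (A := A) b)) := by
  rw [Set.symmDiff_def]
  exact (((isClosed_sigmaA a).sdiff (isOpen_sigmaA b)).union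
    ((isClosed_sigmaA b).sdiff (isOpen_sigmaA a)))

/-- Prime filter separation: if `¬ a ≤ b` there is a prime filter containing `a`
but not `b`.  Uses Zorn's lemma. -/
lemma exists_primeFilter {a b : A} (h : ¬ a ≤ b) :
    ∃ P : PrimeFilter A, a ∈ P.carrier ∧ b ∉ P.carrier := by
  classical
  set S : Set (Set A) :=
    {F | (⊤ ∈ F ∧ (∀ {x y : A}, x ∈ F → x ≤ y → y ∈ F) ∧
      (∀ {x y : A}, x ∈ F → y ∈ F → x ⊓ y ∈ F)) ∧ a ∈ F ∧ b ∉ F} with hS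
  have h0 : Set.Ici a ∈ S := by
    refine ⟨⟨le_top, ?_, ?_⟩, le_refl a, h⟩
    · intro x y hx hxy; exact le_trans hx hxy
    · intro x y hx hy; exact le_inf hx hy
  have hchain : ∀ c ⊆ S, IsChain (fun x1 x2 => x1 ⊆ x2) c → c.Nonempty →
      ∃ ub ∈ S, ∀ s ∈ c, s ⊆ ub := by
    intro c hcS hc ⟨F0, hF0⟩
    refine ⟨⋃₀ c, ⟨⟨?_, ?_, ?_⟩, ?_, ?_⟩, fun s hs => Set.subset_sUnion_of_mem hs⟩
    · exact ⟨F0, hF0, (hcS hF0).1.1⟩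
    · rintro x y ⟨F, hF, hx⟩ hxy
      exact ⟨F, hF, (hcS hF).1.2.1 hx hxy⟩
    · rintro x y ⟨F, hF, hx⟩ ⟨F', hF', hy⟩
      rcases hc.total hF hF' with hFF | hFF
      · exact ⟨F', hF', (hcS hF').1.2.2 (hFF hx) hy⟩
      · exact ⟨F, hF, (hcS hF).1.2.2 hx (hFF hy)⟩
    · exact ⟨F0, hF0, (hcS hF0).2.1⟩
    · rintro ⟨F, hF, hb⟩
      exact (hcS hF).2.2 hb
  obtain ⟨M, -, hM⟩ := zorn_subset_nonempty S hchain (Set.Ici a) h0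
  obtain ⟨⟨htop, hup, hinf⟩, haM, hbM⟩ := hM.prop
  -- maximality: any strictly larger filter contains b
  have hmax : ∀ x : A, x ∉ M → ∃ p ∈ M, p ⊓ x ≤ b := by
    intro x hx
    by_contra hno
    push_neg at hno
    set F : Set A := {z | ∃ p ∈ M, p ⊓ x ≤ z} with hF
    have hMF : M ⊆ F := fun z hz => ⟨z, hz, inf_le_left⟩
    have hFS : F ∈ S := by
      refine ⟨⟨hMF htop, ?_, ?_⟩, hMF haM, ?_⟩
      · rintro z w ⟨p, hp, hpz⟩ hzw; exact ⟨p, hp, hpz.trans hzw⟩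
      · rintro z w ⟨p, hp, hpz⟩ ⟨q, hq, hqw⟩
        exact ⟨p ⊓ q, hinf hp hq,
          le_inf (le_trans (inf_le_inf_right x inf_le_left) hpz)
            (le_trans (inf_le_inf_right x inf_le_right) hqw)⟩
      · rintro ⟨p, hp, hpb⟩; exact hno p hp hpb
    have : F ⊆ M := hM.2 hFS hMF
    exact hx (this ⟨⊤, htop, by simpa using inf_le_right⟩)
  refine ⟨⟨M, htop, ?_, hup, hinf, ?_⟩, haM, hbM⟩
  · intro hbot; exact hbM (hup hbot bot_le)
  · intro x y hxy
    by_contra hcon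
    push_neg at hcon
    obtain ⟨hx, hy⟩ := hcon
    obtain ⟨p, hp, hpb⟩ := hmax x hx
    obtain ⟨q, hq, hqb⟩ := hmax y hy
    have hmem : (p ⊓ q) ⊓ (x ⊔ y) ∈ M := hinf (hinf hp hq) hxy
    have hle : (p ⊓ q) ⊓ (x ⊔ y) ≤ b := by
      rw [inf_sup_left]
      refine sup_le (le_trans ?_ hpb) (le_trans ?_ hqb)
      · exact inf_le_inf_right x inf_le_left
      · exact inf_le_inf_right y inf_le_right
    exact hbM (hup hmem hle)

lemma sigmaA_subset_iff {a b : A} : sigmaA a ⊆ sigmaA (A := A) b ↔ a ≤ b := by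
  constructor
  · intro h
    by_contra hab
    obtain ⟨P, haP, hbP⟩ := exists_primeFilter hab
    exact hbP (h haP)
  · intro hab P hP; exact P.mem_of_le hP hab

/-- The characteristic-function embedding into `A → Bool`. -/
noncomputable def chiPF (P : PrimeFilter A) : A → Bool :=
  fun a => @decide (a ∈ P.carrier) (Classical.dec _)

lemma chiPF_eq_true {P : PrimeFilter A} {a : A} : chiPF P a = true ↔ a ∈ P.carrier := by
  simp [chiPF]

lemma chiPF_inducing : Topology.IsInducing (chiPF (A := A)) := by
  constructor
  refine le_antisymm ?_ ?_
  · -- generated topology is finer: `chiPF` is continuous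
    rw [← continuous_iff_le_induced]
    refine continuous_pi fun a => ?_
    rw [continuous_discrete_rng]
    intro y
    cases y
    · convert isOpen_compl_sigmaA (A := A) a using 1
      ext P
      simp only [Set.mem_preimage, Set.mem_singleton_iff, Set.mem_compl_iff, mem_sigmaA]
      rw [← Bool.not_eq_true, chiPF_eq_true]
    · convert isOpen_sigmaA (A := A) a using 1
      ext P; simp [chiPF_eq_true, mem_sigmaA]
  · -- induced topology is finer: every subbasic set is induced-open
    refine le_generateFrom ?_
    rintro s (⟨a, rfl⟩ | ⟨a, rfl⟩)
    · refine ⟨(fun g : A → Bool => g a) ⁻¹' {true}, (continuous_apply a).isOpen_preimage _ trivial, ?_⟩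
      ext P; simp [chiPF_eq_true, mem_sigmaA]
    · refine ⟨(fun g : A → Bool => g a) ⁻¹' {false}, (continuous_apply a).isOpen_preimage _ trivial, ?_⟩
      ext P
      simp only [Set.mem_preimage, Set.mem_singleton_iff, Set.mem_compl_iff, mem_sigmaA]
      rw [← Bool.not_eq_true, chiPF_eq_true]

lemma chiPF_range : Set.range (chiPF (A := A)) =
    {g : A → Bool | g ⊤ = true} ∩ {g | g ⊥ = false} ∩
      (⋂ (x : A) (y : A), {g | g (x ⊓ y) = (g x && g y)}) ∩
      (⋂ (x : A) (y : A), {g | g (x ⊔ y) = (g x || g y)}) := by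
  ext g
  simp only [Set.mem_inter_iff, Set.mem_iInter, Set.mem_setOf_eq, Set.mem_range]
  constructor
  · rintro ⟨P, rfl⟩
    refine ⟨⟨⟨?_, ?_⟩, ?_⟩, ?_⟩
    · exact chiPF_eq_true.mpr P.top_mem
    · rw [← Bool.not_eq_true, chiPF_eq_true]; exact P.bot_notMem
    · intro x y
      rw [Bool.eq_iff_iff, Bool.and_eq_true, chiPF_eq_true, chiPF_eq_true, chiPF_eq_true]
      constructor
      · intro h; exact ⟨P.mem_of_le h inf_le_left, P.mem_of_le h inf_le_right⟩
      · rintro ⟨h1, h2⟩; exact P.inf_mem h1 h2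
    · intro x y
      rw [Bool.eq_iff_iff, Bool.or_eq_true, chiPF_eq_true, chiPF_eq_true, chiPF_eq_true]
      constructor
      · intro h; exact P.prime h
      · rintro (h | h)
        · exact P.mem_of_le h le_sup_left
        · exact P.mem_of_le h le_sup_right
  · rintro ⟨⟨⟨h1, h2⟩, h3⟩, h4⟩
    refine ⟨⟨{x | g x = true}, h1, by simp [h2], ?_, ?_, ?_⟩, ?_⟩
    · intro x y hx hxy
      have : x ⊓ y = x := inf_eq_left.mpr hxy
      have h5 := h3 x y
      rw [this] at h5
      simp only [Set.mem_setOf_eq] at hx ⊢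
      rw [hx] at h5
      simpa using h5.symm
    · intro x y hx hy
      simp only [Set.mem_setOf_eq] at hx hy ⊢
      rw [h3 x y, hx, hy]; rfl
    · intro x y hxy
      simp only [Set.mem_setOf_eq] at hxy ⊢
      rw [h4 x y] at hxy
      simpa using hxy
    · funext x
      simp only [chiPF]
      rcases Bool.eq_false_or_eq_true (g x) with h | h <;>
        simp [h, Set.mem_setOf_eq]

lemma isClosed_chiPF_range : IsClosed (Set.range (chiPF (A := A))) := by
  rw [chiPF_range]
  have hc : ∀ (c : A) (b : Bool), IsClosed {g : A → Bool | g c = b} := by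
    intro c b
    show IsClosed ((fun g : A → Bool => g c) ⁻¹' {b})
    exact (isClosed_discrete ({b} : Set Bool)).preimage (continuous_apply c)
  refine (((hc ⊤ true).inter (hc ⊥ false)).inter ?_).inter ?_
  · refine isClosed_iInter fun x => isClosed_iInter fun y => ?_
    have : {g : A → Bool | g (x ⊓ y) = (g x && g y)} =
        (fun g : A → Bool => (g (x ⊓ y), g x, g y)) ⁻¹' {t | t.1 = (t.2.1 && t.2.2)} := rfl
    rw [this]
    exact (isClosed_discrete ({t : Bool × Bool × Bool | t.1 = (t.2.1 && t.2.2)})).preimage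
      (((continuous_apply _).prodMk ((continuous_apply _).prodMk (continuous_apply _))))
  · refine isClosed_iInter fun x => isClosed_iInter fun y => ?_
    have : {g : A → Bool | g (x ⊔ y) = (g x || g y)} =
        (fun g : A → Bool => (g (x ⊔ y), g x, g y)) ⁻¹' {t | t.1 = (t.2.1 || t.2.2)} := rfl
    rw [this]
    exact (isClosed_discrete ({t : Bool × Bool × Bool | t.1 = (t.2.1 || t.2.2)})).preimage
      (((continuous_apply _).prodMk ((continuous_apply _).prodMk (continuous_apply _))))

instance : CompactSpace (PrimeFilter A) := by
  refine ⟨?_⟩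
  rw [chiPF_inducing.isCompact_iff, Set.image_univ]
  exact isClosed_chiPF_range.isCompact

/-- Finite-cover lemma: if `σ v \ σ u` is covered by finitely many sets
`σ d \ σ c` with `r c d`, then any lattice congruence `r` relates `u` and `v`. -/
lemma congr_of_finite_cover (r : A → A → Prop)
    (hrefl : ∀ x, r x x) (hsymm : ∀ {x y}, r x y → r y x)
    (htrans : ∀ {x y z}, r x y → r y z → r x z)
    (hsup : ∀ {x y u v}, r x y → r u v → r (x ⊔ u) (y ⊔ v))
    (hinf : ∀ {x y u v}, r x y → r u v → r (x ⊓ u) (y ⊓ v)) :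
    ∀ l : List (A × A), (∀ p ∈ l, r p.1 p.2) → ∀ u v : A, u ≤ v →
      (sigmaA v \ sigmaA u ⊆ ⋃ p ∈ l, sigmaA p.2 \ sigmaA (A := A) p.1) → r u v := by
  intro l
  induction l with
  | nil =>
    intro _ u v huv hcov
    have hvu : sigmaA v ⊆ sigmaA (A := A) u := by
      intro P hP
      by_contra hPu
      simpa using hcov ⟨hP, hPu⟩
    have : v ≤ u := sigmaA_subset_iff.mp hvu
    have : u = v := le_antisymm huv this
    rw [this]; exact hrefl v
  | cons p l ih =>
    intro hl u v huv hcov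
    obtain ⟨c, d⟩ := p
    have hcd : r c d := hl (c, d) List.mem_cons_self
    have hl' : ∀ q ∈ l, r q.1 q.2 := fun q hq => hl q (List.mem_cons_of_mem _ hq)
    set m' : A := (u ⊔ c) ⊓ v with hm'
    set m : A := (u ⊔ d) ⊓ v with hm
    have hrm : r m' m := hinf (hsup (hrefl u) hcd) (hrefl v)
    have h1 : r u m' := by
      refine ih hl' u m' (le_inf le_sup_left huv) ?_
      rintro P ⟨hPm, hPu⟩
      have hPv : P ∈ sigmaA v := P.mem_of_le hPm inf_le_right
      have hPuc : u ⊔ c ∈ P.carrier := P.mem_of_le hPm inf_le_left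
      have hPc : c ∈ P.carrier := (P.prime hPuc).resolve_left hPu
      have := hcov ⟨hPv, hPu⟩
      simp only [Set.mem_iUnion, List.mem_cons, exists_prop] at this ⊢
      obtain ⟨q, hq, hPq⟩ := this
      rcases hq with rfl | hq
      · exact absurd hPc hPq.2
      · exact ⟨q, hq, hPq⟩
    have h2 : r m v := by
      refine ih hl' m v inf_le_right ?_
      rintro P ⟨hPv, hPm⟩
      have hPud : u ⊔ d ∉ P.carrier := fun hmem => hPm (P.inf_mem hmem hPv)
      have hPu : u ∉ P.carrier := fun hmem => hPud (P.mem_of_le hmem le_sup_left)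
      have hPd : d ∉ P.carrier := fun hmem => hPud (P.mem_of_le hmem le_sup_right)
      have := hcov ⟨hPv, hPu⟩
      simp only [Set.mem_iUnion, List.mem_cons, exists_prop] at this ⊢
      obtain ⟨q, hq, hPq⟩ := this
      rcases hq with rfl | hq
      · exact absurd hPq.1 hPd
      · exact ⟨q, hq, hPq⟩
    exact htrans (htrans h1 hrm) h2

lemma symmDiff_sigmaA_eq (a b : A) :
    symmDiff (sigmaA a) (sigmaA (A := A) b) = sigmaA (a ⊔ b) \ sigmaA (a ⊓ b) := by
  ext P
  rw [Set.mem_symmDiff]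
  simp only [Set.mem_diff, mem_sigmaA, sigmaA_sup, sigmaA_inf, Set.mem_union,
    Set.mem_inter_iff, mem_sigmaA]
  tauto

lemma symmDiff_sigmaA_inf (c d : A) :
    symmDiff (sigmaA c) (sigmaA (A := A) (c ⊓ d)) = sigmaA c \ sigmaA d := by
  ext P
  rw [Set.mem_symmDiff]
  simp only [Set.mem_diff, mem_sigmaA, sigmaA_inf, Set.mem_inter_iff, mem_sigmaA]
  tauto

/-- Every point of an open set has a symmetric-difference basic neighbourhood inside it. -/
lemma exists_symmDiff_nhd {G : Set (PrimeFilter A)} (hG : IsOpen G)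
    {P : PrimeFilter A} (hP : P ∈ G) :
    ∃ a b : A, P ∈ symmDiff (sigmaA a) (sigmaA b) ∧
      symmDiff (sigmaA a) (sigmaA (A := A) b) ⊆ G := by
  have key : ∀ G : Set (PrimeFilter A), TopologicalSpace.GenerateOpen
      (Set.range (sigmaA (A := A)) ∪ Set.range (fun a : A => (sigmaA a)ᶜ)) G →
      ∀ P ∈ G, ∃ c d : A, P ∈ sigmaA c \ sigmaA d ∧ sigmaA c \ sigmaA (A := A) d ⊆ G := by
    intro G hG
    induction hG with
    | basic s hs =>
      rcases hs with ⟨a, rfl⟩ | ⟨a, rfl⟩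
      · intro P hP
        refine ⟨a, ⊥, ⟨hP, ?_⟩, fun Q hQ => hQ.1⟩
        simp [sigmaA_bot]
      · intro P hP
        refine ⟨⊤, a, ⟨P.top_mem, hP⟩, fun Q hQ => hQ.2⟩
    | univ =>
      intro P _
      refine ⟨⊤, ⊥, ⟨P.top_mem, ?_⟩, fun Q _ => trivial⟩
      simp [sigmaA_bot]
    | inter s t _ _ ihs iht =>
      rintro P ⟨hPs, hPt⟩
      obtain ⟨c, d, ⟨hPc, hPd⟩, hsub⟩ := ihs P hPs
      obtain ⟨c', d', ⟨hPc', hPd'⟩, hsub'⟩ := iht P hPt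
      refine ⟨c ⊓ c', d ⊔ d', ⟨?_, ?_⟩, ?_⟩
      · exact P.inf_mem hPc hPc'
      · intro hmem
        rcases P.prime hmem with h | h
        · exact hPd h
        · exact hPd' h
      · rintro Q ⟨hQc, hQd⟩
        have hQ1 : Q ∈ sigmaA c := Q.mem_of_le hQc inf_le_left
        have hQ2 : Q ∈ sigmaA c' := Q.mem_of_le hQc inf_le_right
        constructor
        · exact hsub ⟨hQ1, fun h => hQd (Q.mem_of_le h le_sup_left)⟩
        · exact hsub' ⟨hQ2, fun h => hQd (Q.mem_of_le h le_sup_right)⟩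
    | sUnion S _ ih =>
      rintro P ⟨s, hsS, hPs⟩
      obtain ⟨c, d, hmem, hsub⟩ := ih s hsS P hPs
      exact ⟨c, d, hmem, hsub.trans (Set.subset_sUnion_of_mem hsS)⟩
  obtain ⟨c, d, hmem, hsub⟩ := key G hG P hP
  refine ⟨c, c ⊓ d, ?_, ?_⟩
  · rw [symmDiff_sigmaA_inf]; exact hmem
  · rw [symmDiff_sigmaA_inf]; exact hsub

end Aux

section Construction

variable {I A : Type*} [LinearOrder I] [DistribLattice A] [BoundedOrder A]

/-- The open set associated to a relation. -/
def GsetOf (r : A → A → Prop) : Set (PrimeFilter A) :=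
  ⋃ p : {p : A × A // r p.1 p.2}, symmDiff (sigmaA p.1.1) (sigmaA p.1.2)

lemma isOpen_GsetOf (r : A → A → Prop) : IsOpen (GsetOf r) :=
  isOpen_iUnion fun p => isOpen_symmDiff_sigmaA p.1.1 p.1.2

lemma sigmaA_phi (L : LMAlg I A) (i : I) (a : A) :
    sigmaA (L.phi i a) = L.fA i ⁻¹' sigmaA (A := A) a := rfl

lemma sigmaA_phibar (L : LMAlg I A) (i : I) (a : A) :
    sigmaA (L.phibar i a) = (sigmaA (L.phi i a))ᶜ := by
  ext P
  simp only [mem_sigmaA, Set.mem_compl_iff]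
  constructor
  · intro h1 h2
    have : (⊥ : A) ∈ P.carrier := by
      rw [← L.inf_phibar i a]; exact P.inf_mem h2 h1
    exact P.bot_notMem this
  · intro h1
    have : L.phi i a ⊔ L.phibar i a ∈ P.carrier := by
      rw [L.sup_phibar i a]; exact P.top_mem
    exact (P.prime this).resolve_left h1

lemma preimage_symmDiff {α β : Type*} (f : α → β) (s t : Set β) :
    f ⁻¹' (symmDiff s t) = symmDiff (f ⁻¹' s) (f ⁻¹' t) := by
  ext x
  simp only [Set.mem_preimage, Set.mem_symmDiff]

/-- `thetaO G` is an LM-congruence whenever `Gᶜ` is semimodal. -/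
lemma isLMCongr_thetaO (L : LMAlg I A) {G : Set (PrimeFilter A)}
    (hsm : Semimodal L.fA Gᶜ) : IsLMCongr L (thetaO G) := by
  have hpre : ∀ (i : I), L.fA i ⁻¹' G ⊆ G := by
    intro i P hP
    by_contra hPG
    exact hsm i ⟨P, hPG, rfl⟩ hP
  have hphi : ∀ (i : I) {x y : A}, thetaO G x y → thetaO G (L.phi i x) (L.phi i y) := by
    intro i x y h
    unfold thetaO at h ⊢
    rw [sigmaA_phi, sigmaA_phi, ← preimage_symmDiff]
    intro P hP
    exact hpre i (Set.mem_preimage.mpr (h hP))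
  refine ⟨?_, ?_, ?_, ?_, ?_, hphi, ?_⟩
  · intro x
    unfold thetaO
    rw [symmDiff_self]
    exact Set.empty_subset G
  · intro x y h
    unfold thetaO at h ⊢
    rwa [symmDiff_comm]
  · intro x y z hxy hyz
    unfold thetaO at hxy hyz ⊢
    exact (symmDiff_triangle (sigmaA x) (sigmaA y) (sigmaA z)).trans
      (Set.union_subset hxy hyz)
  · intro x y u v hxy huv
    unfold thetaO at hxy huv ⊢
    intro P hP
    rw [Set.mem_symmDiff] at hP
    simp only [mem_sigmaA, sigmaA_sup, Set.mem_union] at hP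
    have : P ∈ symmDiff (sigmaA x) (sigmaA y) ∨ P ∈ symmDiff (sigmaA u) (sigmaA (A := A) v) := by
      rw [Set.mem_symmDiff, Set.mem_symmDiff]
      simp only [mem_sigmaA]
      tauto
    rcases this with h | h
    · exact hxy h
    · exact huv h
  · intro x y u v hxy huv
    unfold thetaO at hxy huv ⊢
    intro P hP
    rw [Set.mem_symmDiff] at hP
    simp only [mem_sigmaA, sigmaA_inf, Set.mem_inter_iff] at hP
    have : P ∈ symmDiff (sigmaA x) (sigmaA y) ∨ P ∈ symmDiff (sigmaA u) (sigmaA (A := A) v) := by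
      rw [Set.mem_symmDiff, Set.mem_symmDiff]
      simp only [mem_sigmaA]
      tauto
    rcases this with h | h
    · exact hxy h
    · exact huv h
  · intro i x y h
    unfold thetaO
    rw [sigmaA_phibar, sigmaA_phibar, compl_symmDiff_compl]
    exact hphi i h

lemma semimodal_GsetOf (L : LMAlg I A) {r : A → A → Prop} (hr : IsLMCongr L r) :
    Semimodal L.fA (GsetOf r)ᶜ := by
  rintro i Q ⟨P, hP, rfl⟩
  intro hQ
  apply hP
  simp only [GsetOf, Set.mem_iUnion] at hQ ⊢
  obtain ⟨⟨⟨c, d⟩, hcd⟩, hmem⟩ := hQ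
  refine ⟨⟨(L.phi i c, L.phi i d), hr.phi_congr i hcd⟩, ?_⟩
  rw [← Set.mem_preimage, preimage_symmDiff] at hmem
  rw [sigmaA_phi, sigmaA_phi]
  exact hmem

lemma thetaO_GsetOf (L : LMAlg I A) {r : A → A → Prop} (hr : IsLMCongr L r) :
    thetaO (GsetOf r) = r := by
  funext a b
  apply propext
  constructor
  · intro h
    -- compactness argument
    have hcomp : IsCompact (symmDiff (sigmaA a) (sigmaA (A := A) b)) :=
      (isClosed_symmDiff_sigmaA a b).isCompact
    obtain ⟨t, ht⟩ := hcomp.elim_finite_subcover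
      (fun p : {p : A × A // r p.1 p.2} => symmDiff (sigmaA p.1.1) (sigmaA (A := A) p.1.2))
      (fun p => isOpen_symmDiff_sigmaA p.1.1 p.1.2) h
    set l : List (A × A) := t.toList.map (fun p => (p.1.1 ⊓ p.1.2, p.1.1 ⊔ p.1.2)) with hl
    have hlr : ∀ q ∈ l, r q.1 q.2 := by
      intro q hq
      rw [hl, List.mem_map] at hq
      obtain ⟨p, -, rfl⟩ := hq
      have hcd : r p.1.1 p.1.2 := p.2
      have h1 : r (p.1.1 ⊓ p.1.2) p.1.2 := by
        have := hr.inf_congr hcd (hr.refl p.1.2)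
        simpa using this
      have h2 : r (p.1.1 ⊔ p.1.2) p.1.2 := by
        have := hr.sup_congr hcd (hr.refl p.1.2)
        simpa using this
      exact hr.trans h1 (hr.symm h2)
    have hcov : sigmaA (a ⊔ b) \ sigmaA (a ⊓ b) ⊆
        ⋃ q ∈ l, sigmaA q.2 \ sigmaA (A := A) q.1 := by
      rw [← symmDiff_sigmaA_eq]
      refine ht.trans ?_
      intro P hP
      simp only [Set.mem_iUnion, exists_prop] at hP ⊢
      obtain ⟨p, hpt, hPp⟩ := hP
      refine ⟨(p.1.1 ⊓ p.1.2, p.1.1 ⊔ p.1.2), ?_, ?_⟩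
      · rw [hl, List.mem_map]
        exact ⟨p, Finset.mem_toList.mpr hpt, rfl⟩
      · rw [← symmDiff_sigmaA_eq] at *
        exact hPp
    have huv : r (a ⊓ b) (a ⊔ b) :=
      congr_of_finite_cover r hr.refl (fun h => hr.symm h) (fun h1 h2 => hr.trans h1 h2)
        (fun h1 h2 => hr.sup_congr h1 h2) (fun h1 h2 => hr.inf_congr h1 h2)
        l hlr (a ⊓ b) (a ⊔ b) inf_le_sup hcov
    have ha : r a (a ⊔ b) := by
      have := hr.sup_congr (hr.refl a) huv
      simpa [sup_inf_self, ← sup_assoc] using this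
    have hb : r b (a ⊔ b) := by
      have := hr.sup_congr (hr.refl b) huv
      have h1 : b ⊔ (a ⊓ b) = b := by simp [sup_comm, inf_comm, sup_inf_self]
      have h2 : b ⊔ (a ⊔ b) = a ⊔ b := by
        rw [sup_comm a b, ← sup_assoc, sup_idem]
      rwa [h1, h2] at this
    exact hr.trans ha (hr.symm hb)
  · intro hab
    exact Set.subset_iUnion
      (fun p : {p : A × A // r p.1 p.2} => symmDiff (sigmaA p.1.1) (sigmaA (A := A) p.1.2))
      ⟨(a, b), hab⟩

lemma GsetOf_thetaO {G : Set (PrimeFilter A)} (hG : IsOpen G) :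
    GsetOf (thetaO G) = G := by
  apply subset_antisymm
  · exact Set.iUnion_subset fun p => p.2
  · intro P hP
    obtain ⟨a, b, hmem, hsub⟩ := exists_symmDiff_nhd hG hP
    exact Set.mem_iUnion.mpr ⟨⟨(a, b), hsub⟩, hmem⟩

end Construction


/-- `Θ_OS` is a lattice isomorphism from the lattice of open subsets of `X(A)`
with semimodal complement onto the lattice of LM_θ-congruences on `A`. -/
theorem stmt0 {I A : Type*} [LinearOrder I] [DistribLattice A] [BoundedOrder A]
    (L : LMAlg I A) :
    ∃ e : {G : Set (PrimeFilter A) // IsOpen G ∧ Semimodal L.fA Gᶜ} ≃o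
          {r : A → A → Prop // IsLMCongr L r},
      ∀ G, (e G).val = fun a b => symmDiff (sigmaA a) (sigmaA b) ⊆ G.val := by
  refine ⟨⟨⟨fun G => ⟨thetaO G.1, isLMCongr_thetaO L G.2.2⟩,
    fun r => ⟨GsetOf r.1, isOpen_GsetOf r.1, semimodal_GsetOf L r.2⟩,
    fun G => Subtype.ext (GsetOf_thetaO G.2.1),
    fun r => Subtype.ext (thetaO_GsetOf L r.2)⟩, ?_⟩, fun G => rfl⟩
  intro G G'
  simp only [Equiv.coe_fn_mk, Subtype.mk_le_mk]
  constructor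
  · intro h
    show G.1 ⊆ G'.1
    intro P hP
    obtain ⟨a, b, hmem, hsub⟩ := exists_symmDiff_nhd G.2.1 hP
    have h1 : thetaO G.1 a b := hsub
    have h2 : thetaO G'.1 a b := h a b h1
    exact h2 hmem
  · intro h a b hab
    exact Set.Subset.trans hab h
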